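/- (Multi-constraint Lagrangian stationarity determines the Thanos update.) Let H ∈ ℝ^{b×b} be symmetric positive definite, w ∈ ℝ^{1×b}, and 1 ≤ q₁ < ⋯ < q_s ≤ b. With R ∈ ℝ^{s×b} having rows R_{i:} = H⁻¹_{q_i:}, R̂_{ij} = H⁻¹_{q_i q_j}, and u = (w_{q₁},…,w_{q_s}): if δ ∈ ℝ^{1×b} and λ = (λ₁,…,λ_s) ∈ ℝ^{1×s} satisfy H δᵀ + Σ_{j=1}^{s} λ_j e^{q_j} = 0 and δ_{q_j} + w_{q_j} = 0 for all j, then λ R̂ = u, hence λ = u R̂⁻¹ and δ = −u R̂⁻¹ R. -/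

import Mathlib

open Matrix BigOperators

lemma posdef_submatrix_inj {n m : Type*} [Fintype n] [Fintype m] [DecidableEq n] [DecidableEq m]
    {M : Matrix n n ℝ} (hM : M.PosDef) (e : m → n) (he : Function.Injective e) :
    (M.submatrix e e).PosDef := by
  refine posDef_iff_dotProduct_mulVec.mpr ⟨hM.1.submatrix e, fun x hx => ?_⟩
  set y : n → ℝ := fun j => ∑ i, if e i = j then x i else 0 with hy
  have hyi : ∀ i, y (e i) = x i := by
    intro i
    simp only [hy, he.eq_iff]
    rw [Finset.sum_ite_eq' Finset.univ i x]
    simp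
  have hyne : y ≠ 0 := by
    intro h0
    apply hx
    funext i
    have := congrFun h0 (e i)
    rw [hyi i] at this
    simpa using this
  have hpos := (posDef_iff_dotProduct_mulVec.mp hM).2 hyne
  have heq : star y ⬝ᵥ M *ᵥ y = star x ⬝ᵥ (M.submatrix e e) *ᵥ x := by
    simp only [star_trivial, dotProduct, Matrix.mulVec, Matrix.submatrix_apply, hy]
    have inner : ∀ j, (∑ k, M j k * ∑ i', (if e i' = k then x i' else 0))
        = ∑ i', M j (e i') * x i' := by
      intro j
      simp only [Finset.mul_sum, mul_ite, mul_zero]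
      rw [Finset.sum_comm]
      refine Finset.sum_congr rfl fun i' _ => ?_
      simp [Finset.sum_ite_eq]
    simp only [inner]
    simp only [Finset.sum_mul, ite_mul, zero_mul]
    rw [Finset.sum_comm]
    refine Finset.sum_congr rfl fun i _ => ?_
    simp [Finset.sum_ite_eq]
  rw [heq] at hpos
  exact hpos

/-- Multi-constraint Lagrangian stationarity determines the Thanos update:
stationarity `H δᵀ + Σ_j λ_j e^{q_j} = 0` and feasibility
`δ_{q_j} + w_{q_j} = 0` imply `λ R̂ = u`, hence `λ = u R̂⁻¹` and
`δ = −u R̂⁻¹ R`. -/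
theorem thanos_stmt18 (b s : ℕ) (H : Matrix (Fin b) (Fin b) ℝ) (hH : H.PosDef)
    (w : Fin b → ℝ) (q : Fin s → Fin b) (hq : StrictMono q)
    (R : Matrix (Fin s) (Fin b) ℝ) (hR : R = Matrix.of fun i j => H⁻¹ (q i) j)
    (Rhat : Matrix (Fin s) (Fin s) ℝ)
    (hRhat : Rhat = Matrix.of fun i j => H⁻¹ (q i) (q j))
    (u : Fin s → ℝ) (hu : u = fun i => w (q i))
    (δ : Fin b → ℝ) (lam : Fin s → ℝ)
    (hstat : H *ᵥ δ + ∑ j, lam j • (Pi.single (q j) 1 : Fin b → ℝ) = 0)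
    (hfeas : ∀ j : Fin s, δ (q j) + w (q j) = 0) :
    Matrix.vecMul lam Rhat = u ∧
      lam = Matrix.vecMul u Rhat⁻¹ ∧
      δ = -(Matrix.vecMul (Matrix.vecMul u Rhat⁻¹) R) := by
  have hinv : H⁻¹.PosDef := hH.inv
  have hsym : ∀ i j, H⁻¹ i j = H⁻¹ j i := fun i j => by
    simpa using (hinv.1.apply i j).symm
  have hHdet : IsUnit H.det := isUnit_iff_ne_zero.mpr hH.det_pos.ne'
  -- solve for δ
  have hδ : δ = -(H⁻¹ *ᵥ ∑ j, lam j • (Pi.single (q j) 1 : Fin b → ℝ)) := by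
    have h1 : H *ᵥ δ = -(∑ j, lam j • (Pi.single (q j) 1 : Fin b → ℝ)) := by
      rw [eq_neg_iff_add_eq_zero]; exact hstat
    calc δ = H⁻¹ *ᵥ (H *ᵥ δ) := by
            rw [Matrix.mulVec_mulVec, Matrix.nonsing_inv_mul _ hHdet, Matrix.one_mulVec]
      _ = -(H⁻¹ *ᵥ ∑ j, lam j • (Pi.single (q j) 1 : Fin b → ℝ)) := by
            rw [h1, Matrix.mulVec_neg]
  have hδk : ∀ k, δ k = -∑ j, lam j * H⁻¹ k (q j) := by
    intro k
    rw [hδ]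
    simp only [Pi.neg_apply, neg_inj, Matrix.mulVec, dotProduct, Finset.sum_apply,
      Pi.smul_apply, Pi.single_apply, smul_eq_mul, mul_ite, mul_one, mul_zero,
      Finset.mul_sum]
    rw [Finset.sum_comm]
    refine Finset.sum_congr rfl fun j _ => ?_
    simp [mul_ite, Finset.sum_ite_eq' Finset.univ, mul_comm]
  have key1 : Matrix.vecMul lam Rhat = u := by
    funext i
    have h1 : (Matrix.vecMul lam Rhat) i = ∑ j, lam j * H⁻¹ (q i) (q j) := by
      simp only [Matrix.vecMul, dotProduct, hRhat, Matrix.of_apply]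
      exact Finset.sum_congr rfl fun j _ => by rw [hsym (q j) (q i)]
    have h2 : δ (q i) = -w (q i) := by linarith [hfeas i]
    rw [h1, hu]
    have h3 := hδk (q i)
    rw [h2] at h3
    simp only
    linarith [h3]
  have hRhatPD : Rhat.PosDef := by
    have : Rhat = H⁻¹.submatrix q q := by rw [hRhat]; rfl
    rw [this]; exact posdef_submatrix_inj hinv q hq.injective
  have hRdet : IsUnit Rhat.det := isUnit_iff_ne_zero.mpr hRhatPD.det_pos.ne'
  have key2 : lam = Matrix.vecMul u Rhat⁻¹ := by
    rw [← key1, Matrix.vecMul_vecMul, Matrix.mul_nonsing_inv _ hRdet, Matrix.vecMul_one]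
  have key3 : δ = -(Matrix.vecMul lam R) := by
    funext k
    rw [hδk k]
    simp only [Pi.neg_apply, neg_inj, Matrix.vecMul, dotProduct, hR, Matrix.of_apply]
    exact Finset.sum_congr rfl fun j _ => by rw [hsym k (q j)]
  exact ⟨key1, key2, by rw [key3, key2]⟩
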